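/- Let α and β be exponent sequences with β stable, and assume there exist A, B > 0 with β_n ≤ A α_n + B for all n ∈ ℕ. Let θ : ℕ → ℂ satisfy θ ∈ Λ_1(β). Then there exists m ∈ ℕ such that for every positive integer k there is C > 0 with ∑_{j=0}^∞ |θ_{j+n}| · e^{-β_j/k} ≤ C · e^{m α_n} for all n ∈ ℕ (i.e., the Hankel operator H_θ : Λ_∞(α) → Λ_1(β) is continuous and satisfies the compactness condition, the index m being independent of k). -/

import Mathlib

/-- If `β` is stable, `β_n ≤ A α_n + B` and `θ ∈ Λ_1(β)`, then the Hankel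
operator `H_θ : Λ_∞(α) → Λ_1(β)` is continuous and satisfies the compactness condition
(the index `m` is independent of `k`). -/
theorem hankel_infinite_to_finite_compact
    (α β : ℕ → ℝ) (θ : ℕ → ℂ)
    (hα_nonneg : ∀ n, 0 ≤ α n) (hα_mono : Monotone α)
    (hα_tendsto : Filter.Tendsto α Filter.atTop Filter.atTop)
    (hβ_nonneg : ∀ n, 0 ≤ β n) (hβ_mono : Monotone β)
    (hβ_tendsto : Filter.Tendsto β Filter.atTop Filter.atTop)
    (hβ_stable : ∃ M : ℝ, 0 < M ∧ ∀ n : ℕ, β (2 * n) ≤ M * β n)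
    (hAB : ∃ A B : ℝ, 0 < A ∧ 0 < B ∧ ∀ n : ℕ, β n ≤ A * α n + B)
    (hθ : ∀ k : ℕ, 0 < k → Summable fun n : ℕ => ‖θ n‖ * Real.exp (-β n / (k : ℝ))) :
    ∃ m : ℕ, ∀ k : ℕ, 0 < k → ∃ C : ℝ, 0 < C ∧
      ∀ n : ℕ, (∑' j : ℕ, ‖θ (j + n)‖ * Real.exp (-β j / (k : ℝ))) ≤
        C * Real.exp ((m : ℝ) * α n) := by
  obtain ⟨M, hM, hMstab⟩ := hβ_stable
  obtain ⟨A, B, hA, hB, hABle⟩ := hAB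
  -- key subadditivity: β (j+n) ≤ M * β j + M * β n
  have hsub : ∀ j n : ℕ, β (j + n) ≤ M * β j + M * β n := by
    intro j n
    have h1 : j + n ≤ 2 * max j n := by
      rcases le_total j n with h | h <;> simp [max_eq_right, max_eq_left, h] <;> omega
    have h2 : β (j + n) ≤ M * β (max j n) :=
      le_trans (hβ_mono h1) (hMstab _)
    rcases le_total j n with h | h
    · rw [max_eq_right h] at h2
      have : 0 ≤ M * β j := mul_nonneg hM.le (hβ_nonneg j)
      linarith
    · rw [max_eq_left h] at h2
      have : 0 ≤ M * β n := mul_nonneg hM.le (hβ_nonneg n)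
      linarith
  refine ⟨⌈A⌉₊, fun k hk => ?_⟩
  have hkR : (0:ℝ) < (k:ℝ) := Nat.cast_pos.mpr hk
  set k' : ℕ := ⌈M * k⌉₊ with hk'def
  have hMk : (0:ℝ) < M * k := mul_pos hM hkR
  have hk' : 0 < k' := Nat.ceil_pos.mpr hMk
  have hk'ge : M * k ≤ (k' : ℝ) := Nat.le_ceil _
  have hk'R : (0:ℝ) < (k':ℝ) := Nat.cast_pos.mpr hk'
  -- f i := ‖θ i‖ * exp (-β i / (M*k)) is summable
  set f : ℕ → ℝ := fun i => ‖θ i‖ * Real.exp (-β i / (M * k)) with hfdef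
  have hf_nonneg : ∀ i, 0 ≤ f i := fun i =>
    mul_nonneg (norm_nonneg _) (Real.exp_pos _).le
  have hf_summable : Summable f := by
    refine Summable.of_nonneg_of_le hf_nonneg (fun i => ?_) (hθ k' hk')
    refine mul_le_mul_of_nonneg_left (Real.exp_le_exp.mpr ?_) (norm_nonneg _)
    rw [div_le_div_iff₀ hMk hk'R]
    have := hβ_nonneg i
    nlinarith
  have hS_nonneg : 0 ≤ ∑' i, f i := tsum_nonneg hf_nonneg
  refine ⟨Real.exp B * (∑' i, f i + 1), by positivity, fun n => ?_⟩
  -- pointwise bound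
  have hpt : ∀ j : ℕ, ‖θ (j + n)‖ * Real.exp (-β j / (k : ℝ)) ≤
      f (j + n) * Real.exp (β n / k) := by
    intro j
    rw [hfdef]
    dsimp only
    rw [mul_assoc, ← Real.exp_add]
    refine mul_le_mul_of_nonneg_left (Real.exp_le_exp.mpr ?_) (norm_nonneg _)
    have h := hsub j n
    have h5 : β (j + n) / (M * k) ≤ β j / k + β n / k := by
      rw [← add_div, div_le_div_iff₀ hMk hkR]
      nlinarith [mul_le_mul_of_nonneg_right h hkR.le]
    rw [neg_div, neg_div]
    linarith
  have hinj : Function.Injective (fun j : ℕ => j + n) := add_left_injective n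
  have hg_summable : Summable (fun j => f (j + n)) :=
    (hf_summable.comp_injective hinj)
  have hh_summable : Summable (fun j => f (j + n) * Real.exp (β n / k)) :=
    hg_summable.mul_right _
  have hlhs_summable : Summable (fun j : ℕ => ‖θ (j + n)‖ * Real.exp (-β j / (k : ℝ))) := by
    refine Summable.of_nonneg_of_le (fun j => mul_nonneg (norm_nonneg _) (Real.exp_pos _).le)
      hpt hh_summable
  calc (∑' j : ℕ, ‖θ (j + n)‖ * Real.exp (-β j / (k : ℝ)))
      ≤ ∑' j : ℕ, f (j + n) * Real.exp (β n / k) :=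
        hlhs_summable.tsum_le_tsum hpt hh_summable
    _ = (∑' j : ℕ, f (j + n)) * Real.exp (β n / k) := tsum_mul_right
    _ ≤ (∑' i, f i) * Real.exp (β n / k) := by
        refine mul_le_mul_of_nonneg_right ?_ (Real.exp_pos _).le
        exact hg_summable.tsum_le_tsum_of_inj _ hinj (fun c _ => hf_nonneg c) (fun j => le_refl _)
          hf_summable
    _ ≤ (∑' i, f i + 1) * Real.exp (β n / k) := by
        refine mul_le_mul_of_nonneg_right (by linarith) (Real.exp_pos _).le
    _ ≤ (∑' i, f i + 1) * Real.exp (B + (⌈A⌉₊ : ℝ) * α n) := by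
        refine mul_le_mul_of_nonneg_left (Real.exp_le_exp.mpr ?_) (by linarith)
        have h1 : β n / k ≤ β n := by
          rw [div_le_iff₀ hkR]
          have h2 : (1:ℝ) ≤ (k:ℝ) := by exact_mod_cast hk
          nlinarith [hβ_nonneg n]
        have h3 : β n ≤ A * α n + B := hABle n
        have h4 : A * α n ≤ (⌈A⌉₊ : ℝ) * α n :=
          mul_le_mul_of_nonneg_right (Nat.le_ceil A) (hα_nonneg n)
        linarith
    _ = Real.exp B * (∑' i, f i + 1) * Real.exp ((⌈A⌉₊ : ℝ) * α n) := by
        rw [Real.exp_add]; ring
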